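/- Let m ≥ 3 and n ≥ 2 be integers, and suppose c is a locating (m+1)-coloring of K_m □ P_n (vertices indexed by pairs (i,j) with i ∈ {1,...,m}, j ∈ {1,...,n}, where the j-th column {(i,j) : 1 ≤ i ≤ m} induces K_m and each row induces P_n). Then for every j with 1 ≤ j ≤ n−1, the color missing from column j differs from the color missing from column j+1; that is, there is no color absent from both column j and column j+1. -/

import Mathlib

open SimpleGraph

/-- The distance from a vertex to a set of vertices. -/
noncomputable def setDist {V : Type*} (G : SimpleGraph V) (v : V) (S : Set V) : ℕ :=
  sInf (G.dist v '' S)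

/-- The color code of a vertex with respect to a `k`-coloring `c`:
the tuple of distances to the color classes. -/
noncomputable def colorCode {V : Type*} (G : SimpleGraph V) {k : ℕ} (c : V → Fin k)
    (v : V) : Fin k → ℕ :=
  fun i => setDist G v (c ⁻¹' {i})

/-- `c` is a locating `k`-coloring of `G`: a proper coloring onto the `k` colors
such that distinct vertices have distinct color codes. -/
def IsLocatingColoring {V : Type*} (G : SimpleGraph V) {k : ℕ} (c : V → Fin k) : Prop :=
  Function.Surjective c ∧
  (∀ u v : V, G.Adj u v → c u ≠ c v) ∧
  Function.Injective (colorCode G c)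

/-- The locating chromatic number: the least `k` admitting a locating `k`-coloring. -/
noncomputable def locatingChromaticNumber {V : Type*} (G : SimpleGraph V) : ℕ :=
  sInf {k : ℕ | ∃ c : V → Fin k, IsLocatingColoring G c}

/-- A vertex is colorful w.r.t. a coloring `c` if every color appears in its
closed neighborhood. -/
def IsColorful {V : Type*} (G : SimpleGraph V) {k : ℕ} (c : V → Fin k) (v : V) : Prop :=
  ∀ i : Fin k, ∃ u : V, (u = v ∨ G.Adj v u) ∧ c u = i

-- walk existence of the right length in pathGraph
lemma pg_walk (n : ℕ) : ∀ (k : ℕ) (a b : Fin n), Nat.dist a.val b.val = k →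
    ∃ w : (pathGraph n).Walk a b, w.length = k := by
  intro k
  induction k with
  | zero =>
    intro a b h
    have : a = b := Fin.ext (by simp [Nat.dist] at h; omega)
    subst this
    exact ⟨SimpleGraph.Walk.nil, rfl⟩
  | succ k ih =>
    intro a b h
    rcases lt_or_ge a.val b.val with hlt | hle
    · have hb : a.val + 1 < n := lt_of_le_of_lt hlt b.isLt
      set a' : Fin n := ⟨a.val + 1, hb⟩ with ha'
      have hadj : (pathGraph n).Adj a a' := by
        rw [pathGraph_adj]; left; rfl
      obtain ⟨w, hw⟩ := ih a' b (by simp [Nat.dist, ha'] at h ⊢; omega)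
      exact ⟨SimpleGraph.Walk.cons hadj w, by simp [hw]⟩
    · have hba : b.val < a.val := by simp [Nat.dist] at h; omega
      set a' : Fin n := ⟨a.val - 1, lt_trans (by omega) a.isLt⟩ with ha'
      have hadj : (pathGraph n).Adj a a' := by
        rw [pathGraph_adj]; right; simp [ha']; omega
      obtain ⟨w, hw⟩ := ih a' b (by simp [Nat.dist, ha'] at h ⊢; omega)
      exact ⟨SimpleGraph.Walk.cons hadj w, by simp [hw]⟩

section DistFormula

variable {m n : ℕ}

local notation "G" => SimpleGraph.boxProd (⊤ : SimpleGraph (Fin m)) (pathGraph n)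

-- lower bound for any walk in the product
lemma walk_len_lb : ∀ {x y : Fin m × Fin n} (w : (G).Walk x y),
    Nat.dist x.2.val y.2.val + (if x.1 = y.1 then 0 else 1) ≤ w.length := by
  intro x y w
  induction w with
  | nil => simp [Nat.dist]
  | @cons x z y h p ih =>
    rcases h with ⟨h1, h2⟩ | ⟨h1, h2⟩
    · -- row changes, column same
      have hd : Nat.dist x.2.val y.2.val = Nat.dist z.2.val y.2.val := by rw [h2]
      have h3 : Nat.dist z.2.val y.2.val ≤ p.length := le_trans (Nat.le_add_right _ _) ih
      have h4 : (if x.1 = y.1 then 0 else 1) ≤ 1 := by split <;> omega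
      show _ ≤ p.length + 1
      omega
    · -- column changes, row same
      have hdist1 : Nat.dist x.2.val z.2.val = 1 := by
        rw [pathGraph_adj] at h1
        simp [Nat.dist]; omega
      have tri : Nat.dist x.2.val y.2.val ≤ Nat.dist x.2.val z.2.val + Nat.dist z.2.val y.2.val :=
        Nat.dist.triangle_inequality _ _ _
      show _ ≤ p.length + 1
      rw [h2]
      rcases eq_or_ne z.1 y.1 with he | he
      · simp only [if_pos he] at ih ⊢; omega
      · simp only [if_neg he] at ih ⊢; omega

end DistFormula

section DistFormula2

variable {m n : ℕ}

lemma prod_dist_eq (x y : Fin m × Fin n) :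
    ((⊤ : SimpleGraph (Fin m)) □ pathGraph n).dist x y
      = Nat.dist x.2.val y.2.val + (if x.1 = y.1 then 0 else 1) := by
  obtain ⟨x1, x2⟩ := x
  obtain ⟨y1, y2⟩ := y
  simp only
  -- construct a walk of the desired length
  obtain ⟨w0, hw0⟩ := pg_walk n (Nat.dist x2.val y2.val) x2 y2 rfl
  have hwalk : ∃ w : ((⊤ : SimpleGraph (Fin m)) □ pathGraph n).Walk (x1, x2) (y1, y2),
      w.length = Nat.dist x2.val y2.val + (if x1 = y1 then 0 else 1) := by
    rcases eq_or_ne x1 y1 with he | he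
    · subst he
      refine ⟨SimpleGraph.Walk.boxProdRight _ x1 w0, ?_⟩
      rw [if_pos rfl, Nat.add_zero]
      exact (SimpleGraph.Walk.length_map _ _).trans hw0
    · have hadj : ((⊤ : SimpleGraph (Fin m)) □ pathGraph n).Adj (x1, y2) (y1, y2) := by
        rw [boxProd_adj]; left; exact ⟨he, rfl⟩
      refine ⟨(SimpleGraph.Walk.boxProdRight _ x1 w0).concat hadj, ?_⟩
      rw [SimpleGraph.Walk.length_concat, if_neg he]
      exact congrArg (· + 1) ((SimpleGraph.Walk.length_map _ _).trans hw0)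
  obtain ⟨w, hw⟩ := hwalk
  refine le_antisymm (hw ▸ SimpleGraph.dist_le w) ?_
  obtain ⟨w', hw'⟩ := (SimpleGraph.Walk.reachable w).exists_walk_length_eq_dist
  exact hw' ▸ walk_len_lb w'

end DistFormula2

section Main

variable {m n : ℕ}

lemma setDist_eq_of {V : Type*} (G : SimpleGraph V) (v : V) (S : Set V) (k : ℕ) (w : V)
    (hw : w ∈ S) (hk : G.dist v w = k) (hmin : ∀ w' ∈ S, k ≤ G.dist v w') :
    setDist G v S = k := by
  refine le_antisymm (Nat.sInf_le ⟨w, hw, hk⟩) (le_csInf ⟨k, ⟨w, hw, hk⟩⟩ ?_)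
  rintro b ⟨w', hw', rfl⟩
  exact hmin w' hw'

lemma dist_pos_of_ne (u w : Fin m × Fin n) (h : u ≠ w) :
    1 ≤ ((⊤ : SimpleGraph (Fin m)) □ pathGraph n).dist u w := by
  rw [prod_dist_eq]
  rcases eq_or_ne u.1 w.1 with he | he
  · have h2 : u.2 ≠ w.2 := fun hh => h (Prod.ext he hh)
    have h3 : u.2.val ≠ w.2.val := fun hh => h2 (Fin.ext hh)
    simp only [if_pos he, Nat.dist]
    omega
  · simp only [if_neg he]
    omega

end Main

section Cases

variable {m n : ℕ} (c : Fin m × Fin n → Fin (m + 1)) (j j' : Fin n) (x : Fin (m + 1))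

lemma case_left
    (hprop : ∀ u v, ((⊤ : SimpleGraph (Fin m)) □ pathGraph n).Adj u v → c u ≠ c v)
    (key : ∀ i1 i2 : Fin m, c (i1, j) = c (i2, j') →
      setDist ((⊤ : SimpleGraph (Fin m)) □ pathGraph n) (i1, j) (c ⁻¹' {x}) =
        setDist ((⊤ : SimpleGraph (Fin m)) □ pathGraph n) (i2, j') (c ⁻¹' {x}) → False)
    (hfull_j : ∀ z, z ≠ x → ∃ i, c (i, j) = z)
    (hj : (j' : ℕ) = (j : ℕ) + 1)
    (hxj' : ∀ i, c (i, j') ≠ x)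
    (hcol : ∀ w : Fin m × Fin n, c w = x → w.2.val ≠ j.val ∧ w.2.val ≠ j.val + 1)
    (w0 : Fin m × Fin n) (hw0x : c w0 = x) (hw0l : w0.2.val < j.val)
    (hmaxl : ∀ w, c w = x → w.2.val < j.val → w.2.val ≤ w0.2.val)
    (hright : ∀ w, c w = x → j.val + 1 < w.2.val →
      j.val + 1 + (j.val - w0.2.val) < w.2.val) :
    False := by
  have hadj_row0 : ((⊤ : SimpleGraph (Fin m)) □ pathGraph n).Adj (w0.1, j) (w0.1, j') := by
    rw [boxProd_adj]; right
    exact ⟨pathGraph_adj.mpr (Or.inl hj.symm), rfl⟩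
  have hyx : c (w0.1, j') ≠ x := hxj' w0.1
  obtain ⟨i1, hi1⟩ := hfull_j (c (w0.1, j')) hyx
  have hne : i1 ≠ w0.1 := by
    intro h
    subst h
    exact hprop _ _ hadj_row0 hi1
  -- lower bound for vertices whose row differs from a given row, from column j
  have D1 : setDist ((⊤ : SimpleGraph (Fin m)) □ pathGraph n) (i1, j) (c ⁻¹' {x})
      = (j.val - w0.2.val) + 1 := by
    refine setDist_eq_of _ _ _ _ w0 hw0x ?_ ?_
    · rw [prod_dist_eq]
      rw [if_neg hne]
      simp [Nat.dist]
      omega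
    · intro w hw
      have hcw : c w = x := hw
      obtain ⟨hne_j, hne_j'⟩ := hcol w hcw
      rw [prod_dist_eq]
      rcases (show w.2.val < j.val ∨ j.val + 1 < w.2.val by omega) with hL | hR
      · have hle := hmaxl w hcw hL
        by_cases hw2 : w.2.val = w0.2.val
        · have hw2' : w.2 = w0.2 := Fin.ext hw2
          have hrow : w.1 = w0.1 := by
            by_contra hne'
            have hadj : ((⊤ : SimpleGraph (Fin m)) □ pathGraph n).Adj (w.1, w.2) (w0.1, w0.2) := by
              rw [boxProd_adj]; left; exact ⟨hne', hw2'⟩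
            exact hprop _ _ hadj (hcw.trans hw0x.symm)
          rw [if_neg (show ¬ (i1 = w.1) from hrow ▸ hne)]
          simp [Nat.dist]
          omega
        · have hnd : (j.val - w0.2.val) + 1 ≤ Nat.dist ((i1, j) : Fin m × Fin n).2.val w.2.val := by
            simp [Nat.dist]; omega
          exact le_trans hnd (Nat.le_add_right _ _)
      · have := hright w hcw hR
        have hnd : (j.val - w0.2.val) + 1 ≤ Nat.dist ((i1, j) : Fin m × Fin n).2.val w.2.val := by
          simp [Nat.dist]; omega
        exact le_trans hnd (Nat.le_add_right _ _)
  have D2 : setDist ((⊤ : SimpleGraph (Fin m)) □ pathGraph n) (w0.1, j') (c ⁻¹' {x})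
      = (j.val - w0.2.val) + 1 := by
    refine setDist_eq_of _ _ _ _ w0 hw0x ?_ ?_
    · rw [prod_dist_eq]
      rw [if_pos rfl]
      simp [Nat.dist]
      omega
    · intro w hw
      have hcw : c w = x := hw
      obtain ⟨hne_j, hne_j'⟩ := hcol w hcw
      rw [prod_dist_eq]
      have hnd : (j.val - w0.2.val) + 1 ≤ Nat.dist ((w0.1, j') : Fin m × Fin n).2.val w.2.val := by
        rcases (show w.2.val < j.val ∨ j.val + 1 < w.2.val by omega) with hL | hR
        · have hle := hmaxl w hcw hL
          simp [Nat.dist]; omega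
        · have := hright w hcw hR
          simp [Nat.dist]; omega
      exact le_trans hnd (Nat.le_add_right _ _)
  exact key i1 w0.1 hi1 (D1.trans D2.symm)

lemma case_right
    (hprop : ∀ u v, ((⊤ : SimpleGraph (Fin m)) □ pathGraph n).Adj u v → c u ≠ c v)
    (key : ∀ i1 i2 : Fin m, c (i1, j) = c (i2, j') →
      setDist ((⊤ : SimpleGraph (Fin m)) □ pathGraph n) (i1, j) (c ⁻¹' {x}) =
        setDist ((⊤ : SimpleGraph (Fin m)) □ pathGraph n) (i2, j') (c ⁻¹' {x}) → False)
    (hfull_j' : ∀ z, z ≠ x → ∃ i, c (i, j') = z)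
    (hj : (j' : ℕ) = (j : ℕ) + 1)
    (hxj : ∀ i, c (i, j) ≠ x)
    (hcol : ∀ w : Fin m × Fin n, c w = x → w.2.val ≠ j.val ∧ w.2.val ≠ j.val + 1)
    (w1 : Fin m × Fin n) (hw1x : c w1 = x) (hw1r : j.val + 1 < w1.2.val)
    (hminr : ∀ w, c w = x → j.val + 1 < w.2.val → w1.2.val ≤ w.2.val)
    (hleft : ∀ w, c w = x → w.2.val < j.val →
      w1.2.val - (j.val + 1) < j.val - w.2.val) :
    False := by
  have hadj_row0 : ((⊤ : SimpleGraph (Fin m)) □ pathGraph n).Adj (w1.1, j) (w1.1, j') := by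
    rw [boxProd_adj]; right
    exact ⟨pathGraph_adj.mpr (Or.inl hj.symm), rfl⟩
  have hyx : c (w1.1, j) ≠ x := hxj w1.1
  obtain ⟨i2, hi2⟩ := hfull_j' (c (w1.1, j)) hyx
  have hne : i2 ≠ w1.1 := by
    intro h
    subst h
    exact hprop _ _ hadj_row0 hi2.symm
  have D1 : setDist ((⊤ : SimpleGraph (Fin m)) □ pathGraph n) (w1.1, j) (c ⁻¹' {x})
      = w1.2.val - j.val := by
    refine setDist_eq_of _ _ _ _ w1 hw1x ?_ ?_
    · rw [prod_dist_eq]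
      rw [if_pos rfl]
      simp [Nat.dist]
      omega
    · intro w hw
      have hcw : c w = x := hw
      obtain ⟨hne_j, hne_j'⟩ := hcol w hcw
      rw [prod_dist_eq]
      have hnd : w1.2.val - j.val ≤ Nat.dist ((w1.1, j) : Fin m × Fin n).2.val w.2.val := by
        rcases (show w.2.val < j.val ∨ j.val + 1 < w.2.val by omega) with hL | hR
        · have := hleft w hcw hL
          simp [Nat.dist]; omega
        · have := hminr w hcw hR
          simp [Nat.dist]; omega
      exact le_trans hnd (Nat.le_add_right _ _)
  have D2 : setDist ((⊤ : SimpleGraph (Fin m)) □ pathGraph n) (i2, j') (c ⁻¹' {x})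
      = w1.2.val - j.val := by
    refine setDist_eq_of _ _ _ _ w1 hw1x ?_ ?_
    · rw [prod_dist_eq]
      rw [if_neg hne]
      simp [Nat.dist]
      omega
    · intro w hw
      have hcw : c w = x := hw
      obtain ⟨hne_j, hne_j'⟩ := hcol w hcw
      rw [prod_dist_eq]
      rcases (show w.2.val < j.val ∨ j.val + 1 < w.2.val by omega) with hL | hR
      · have := hleft w hcw hL
        have hnd : w1.2.val - j.val ≤ Nat.dist ((i2, j') : Fin m × Fin n).2.val w.2.val := by
          simp [Nat.dist]; omega
        exact le_trans hnd (Nat.le_add_right _ _)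
      · have hge := hminr w hcw hR
        by_cases hw2 : w.2.val = w1.2.val
        · have hw2' : w.2 = w1.2 := Fin.ext hw2
          have hrow : w.1 = w1.1 := by
            by_contra hne'
            have hadj : ((⊤ : SimpleGraph (Fin m)) □ pathGraph n).Adj (w.1, w.2) (w1.1, w1.2) := by
              rw [boxProd_adj]; left; exact ⟨hne', hw2'⟩
            exact hprop _ _ hadj (hcw.trans hw1x.symm)
          rw [if_neg (show ¬ (i2 = w.1) from hrow ▸ hne)]
          simp [Nat.dist]
          omega
        · have hnd : w1.2.val - j.val ≤ Nat.dist ((i2, j') : Fin m × Fin n).2.val w.2.val := by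
            simp [Nat.dist]; omega
          exact le_trans hnd (Nat.le_add_right _ _)
  exact key w1.1 i2 hi2.symm (D1.trans D2.symm)

lemma case_eq (hm : 3 ≤ m)
    (hprop : ∀ u v, ((⊤ : SimpleGraph (Fin m)) □ pathGraph n).Adj u v → c u ≠ c v)
    (key : ∀ i1 i2 : Fin m, c (i1, j) = c (i2, j') →
      setDist ((⊤ : SimpleGraph (Fin m)) □ pathGraph n) (i1, j) (c ⁻¹' {x}) =
        setDist ((⊤ : SimpleGraph (Fin m)) □ pathGraph n) (i2, j') (c ⁻¹' {x}) → False)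
    (hfull_j : ∀ z, z ≠ x → ∃ i, c (i, j) = z)
    (hfull_j' : ∀ z, z ≠ x → ∃ i, c (i, j') = z)
    (hj : (j' : ℕ) = (j : ℕ) + 1)
    (hcol : ∀ w : Fin m × Fin n, c w = x → w.2.val ≠ j.val ∧ w.2.val ≠ j.val + 1)
    (w0 : Fin m × Fin n) (hw0x : c w0 = x) (hw0l : w0.2.val < j.val)
    (hmaxl : ∀ w, c w = x → w.2.val < j.val → w.2.val ≤ w0.2.val)
    (w1 : Fin m × Fin n) (hw1x : c w1 = x) (hw1r : j.val + 1 < w1.2.val)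
    (hminr : ∀ w, c w = x → j.val + 1 < w.2.val → w1.2.val ≤ w.2.val)
    (heq : j.val - w0.2.val = w1.2.val - (j.val + 1)) :
    False := by
  obtain ⟨y, hyx, hy0, hy1⟩ :
      ∃ y : Fin (m + 1), y ≠ x ∧ y ≠ c (w0.1, j) ∧ y ≠ c (w1.1, j') := by
    by_contra hcon
    push_neg at hcon
    have hsub : (Finset.univ : Finset (Fin (m + 1))) ⊆ {x, c (w0.1, j), c (w1.1, j')} := by
      intro y _
      simp only [Finset.mem_insert, Finset.mem_singleton]
      by_cases h1 : y = x
      · exact Or.inl h1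
      by_cases h2 : y = c (w0.1, j)
      · exact Or.inr (Or.inl h2)
      exact Or.inr (Or.inr (hcon y h1 h2))
    have h1 : m + 1 ≤ ({x, c (w0.1, j), c (w1.1, j')} : Finset (Fin (m + 1))).card := by
      simpa using Finset.card_le_card hsub
    have h2 : ({x, c (w0.1, j), c (w1.1, j')} : Finset (Fin (m + 1))).card ≤ 3 := by
      refine le_trans (Finset.card_insert_le _ _) ?_
      have h3 := Finset.card_insert_le (c (w0.1, j)) ({c (w1.1, j')} : Finset (Fin (m + 1)))
      simp only [Finset.card_singleton] at h3
      omega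
    omega
  obtain ⟨i1, hi1⟩ := hfull_j y hyx
  obtain ⟨i2, hi2⟩ := hfull_j' y hyx
  have hne1 : i1 ≠ w0.1 := fun h => hy0 (hi1 ▸ h ▸ rfl)
  have hne2 : i2 ≠ w1.1 := fun h => hy1 (hi2 ▸ h ▸ rfl)
  have D1 : setDist ((⊤ : SimpleGraph (Fin m)) □ pathGraph n) (i1, j) (c ⁻¹' {x})
      = (j.val - w0.2.val) + 1 := by
    refine setDist_eq_of _ _ _ _ w0 hw0x ?_ ?_
    · rw [prod_dist_eq]
      rw [if_neg hne1]
      simp [Nat.dist]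
      omega
    · intro w hw
      have hcw : c w = x := hw
      obtain ⟨hne_j, hne_j'⟩ := hcol w hcw
      rw [prod_dist_eq]
      rcases (show w.2.val < j.val ∨ j.val + 1 < w.2.val by omega) with hL | hR
      · have hle := hmaxl w hcw hL
        by_cases hw2 : w.2.val = w0.2.val
        · have hw2' : w.2 = w0.2 := Fin.ext hw2
          have hrow : w.1 = w0.1 := by
            by_contra hne'
            have hadj : ((⊤ : SimpleGraph (Fin m)) □ pathGraph n).Adj (w.1, w.2) (w0.1, w0.2) := by
              rw [boxProd_adj]; left; exact ⟨hne', hw2'⟩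
            exact hprop _ _ hadj (hcw.trans hw0x.symm)
          rw [if_neg (show ¬ (i1 = w.1) from hrow ▸ hne1)]
          simp [Nat.dist]
          omega
        · have hnd : (j.val - w0.2.val) + 1 ≤ Nat.dist ((i1, j) : Fin m × Fin n).2.val w.2.val := by
            simp [Nat.dist]; omega
          exact le_trans hnd (Nat.le_add_right _ _)
      · have hge := hminr w hcw hR
        have hnd : (j.val - w0.2.val) + 1 ≤ Nat.dist ((i1, j) : Fin m × Fin n).2.val w.2.val := by
          simp [Nat.dist]; omega
        exact le_trans hnd (Nat.le_add_right _ _)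
  have D2 : setDist ((⊤ : SimpleGraph (Fin m)) □ pathGraph n) (i2, j') (c ⁻¹' {x})
      = (j.val - w0.2.val) + 1 := by
    refine setDist_eq_of _ _ _ _ w1 hw1x ?_ ?_
    · rw [prod_dist_eq]
      rw [if_neg hne2]
      simp [Nat.dist]
      omega
    · intro w hw
      have hcw : c w = x := hw
      obtain ⟨hne_j, hne_j'⟩ := hcol w hcw
      rw [prod_dist_eq]
      rcases (show w.2.val < j.val ∨ j.val + 1 < w.2.val by omega) with hL | hR
      · have hle := hmaxl w hcw hL
        have hnd : (j.val - w0.2.val) + 1 ≤ Nat.dist ((i2, j') : Fin m × Fin n).2.val w.2.val := by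
          simp [Nat.dist]; omega
        exact le_trans hnd (Nat.le_add_right _ _)
      · have hge := hminr w hcw hR
        by_cases hw2 : w.2.val = w1.2.val
        · have hw2' : w.2 = w1.2 := Fin.ext hw2
          have hrow : w.1 = w1.1 := by
            by_contra hne'
            have hadj : ((⊤ : SimpleGraph (Fin m)) □ pathGraph n).Adj (w.1, w.2) (w1.1, w1.2) := by
              rw [boxProd_adj]; left; exact ⟨hne', hw2'⟩
            exact hprop _ _ hadj (hcw.trans hw1x.symm)
          rw [if_neg (show ¬ (i2 = w.1) from hrow ▸ hne2)]
          simp [Nat.dist]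
          omega
        · have hnd : (j.val - w0.2.val) + 1 ≤ Nat.dist ((i2, j') : Fin m × Fin n).2.val w.2.val := by
            simp [Nat.dist]; omega
          exact le_trans hnd (Nat.le_add_right _ _)
  exact key i1 i2 (hi1.trans hi2.symm) (D1.trans D2.symm)

lemma column_full
    (hprop : ∀ u v, ((⊤ : SimpleGraph (Fin m)) □ pathGraph n).Adj u v → c u ≠ c v)
    (col : Fin n) (hmiss : ∀ i, c (i, col) ≠ x) :
    ∀ z, z ≠ x → ∃ i, c (i, col) = z := by
  intro z hz
  have hinjcol : Function.Injective (fun i : Fin m => c (i, col)) := by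
    intro i i' h
    by_contra hne
    have hadj : ((⊤ : SimpleGraph (Fin m)) □ pathGraph n).Adj (i, col) (i', col) := by
      rw [boxProd_adj]; left; exact ⟨hne, rfl⟩
    exact hprop _ _ hadj h
  have hcard : (Finset.image (fun i : Fin m => c (i, col)) Finset.univ).card = m := by
    rw [Finset.card_image_of_injective _ hinjcol, Finset.card_univ, Fintype.card_fin]
  have hsub : Finset.image (fun i : Fin m => c (i, col)) Finset.univ ⊆
      Finset.univ.erase x := by
    intro z' hz'
    obtain ⟨i, _, rfl⟩ := Finset.mem_image.mp hz'
    exact Finset.mem_erase.mpr ⟨hmiss i, Finset.mem_univ _⟩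
  have hcard2 : ((Finset.univ : Finset (Fin (m + 1))).erase x).card = m := by
    rw [Finset.card_erase_of_mem (Finset.mem_univ _), Finset.card_univ, Fintype.card_fin]
    omega
  have heq : Finset.image (fun i : Fin m => c (i, col)) Finset.univ =
      Finset.univ.erase x :=
    Finset.eq_of_subset_of_card_le hsub (by omega)
  have hmem : z ∈ Finset.image (fun i : Fin m => c (i, col)) Finset.univ := by
    rw [heq]; exact Finset.mem_erase.mpr ⟨hz, Finset.mem_univ _⟩
  obtain ⟨i, _, hi⟩ := Finset.mem_image.mp hmem
  exact ⟨i, hi⟩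

lemma key_lemma
    (hprop : ∀ u v, ((⊤ : SimpleGraph (Fin m)) □ pathGraph n).Adj u v → c u ≠ c v)
    (hinj : Function.Injective (colorCode ((⊤ : SimpleGraph (Fin m)) □ pathGraph n) c))
    (hfull_j : ∀ z, z ≠ x → ∃ i, c (i, j) = z)
    (hfull_j' : ∀ z, z ≠ x → ∃ i, c (i, j') = z)
    (hj : (j' : ℕ) = (j : ℕ) + 1) :
    ∀ i1 i2 : Fin m, c (i1, j) = c (i2, j') →
      setDist ((⊤ : SimpleGraph (Fin m)) □ pathGraph n) (i1, j) (c ⁻¹' {x}) =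
        setDist ((⊤ : SimpleGraph (Fin m)) □ pathGraph n) (i2, j') (c ⁻¹' {x}) → False := by
  intro i1 i2 hcc hdd
  have hcode : colorCode ((⊤ : SimpleGraph (Fin m)) □ pathGraph n) c (i1, j) =
      colorCode ((⊤ : SimpleGraph (Fin m)) □ pathGraph n) c (i2, j') := by
    funext z
    show setDist _ (i1, j) (c ⁻¹' {z}) = setDist _ (i2, j') (c ⁻¹' {z})
    by_cases hzx : z = x
    · subst hzx; exact hdd
    by_cases hz1 : z = c (i1, j)
    · have e1 : setDist ((⊤ : SimpleGraph (Fin m)) □ pathGraph n) (i1, j) (c ⁻¹' {z}) = 0 := by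
        refine setDist_eq_of _ _ _ _ (i1, j) hz1.symm ?_ (fun w' _ => Nat.zero_le _)
        rw [prod_dist_eq]
        simp [Nat.dist]
      have e2 : setDist ((⊤ : SimpleGraph (Fin m)) □ pathGraph n) (i2, j') (c ⁻¹' {z}) = 0 := by
        refine setDist_eq_of _ _ _ _ (i2, j')
          (show c (i2, j') = z from hcc ▸ hz1.symm) ?_ (fun w' _ => Nat.zero_le _)
        rw [prod_dist_eq]
        simp [Nat.dist]
      rw [e1, e2]
    · have hz2 : z ≠ c (i2, j') := hcc ▸ hz1
      obtain ⟨i3, hi3⟩ := hfull_j z hzx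
      obtain ⟨i4, hi4⟩ := hfull_j' z hzx
      have hne3 : i1 ≠ i3 := fun h => hz1 (by rw [h, hi3])
      have hne4 : i2 ≠ i4 := fun h => hz2 (by rw [h, hi4])
      have e1 : setDist ((⊤ : SimpleGraph (Fin m)) □ pathGraph n) (i1, j) (c ⁻¹' {z}) = 1 := by
        refine setDist_eq_of _ _ _ _ (i3, j) hi3 ?_ ?_
        · rw [prod_dist_eq, if_neg hne3]
          simp [Nat.dist]
        · intro w' hw'
          refine dist_pos_of_ne _ _ (fun h => hz1 ?_)
          have : c w' = z := hw'
          rw [← h] at this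
          exact this.symm
      have e2 : setDist ((⊤ : SimpleGraph (Fin m)) □ pathGraph n) (i2, j') (c ⁻¹' {z}) = 1 := by
        refine setDist_eq_of _ _ _ _ (i4, j') hi4 ?_ ?_
        · rw [prod_dist_eq, if_neg hne4]
          simp [Nat.dist]
        · intro w' hw'
          refine dist_pos_of_ne _ _ (fun h => hz2 ?_)
          have : c w' = z := hw'
          rw [← h] at this
          exact this.symm
      rw [e1, e2]
  have heq := hinj hcode
  have hsnd : j = j' := congrArg Prod.snd heq
  have : j.val = j'.val := congrArg Fin.val hsnd
  omega

end Cases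

/-- In any locating `(m+1)`-coloring of `K_m □ P_n` (`m ≥ 3`, `n ≥ 2`),
two consecutive columns have different missing colors: no color is absent from both
column `j` and column `j+1`. -/
theorem stmt5 (m n : ℕ) (hm : 3 ≤ m) (hn : 2 ≤ n)
    (c : Fin m × Fin n → Fin (m + 1))
    (hc : IsLocatingColoring ((⊤ : SimpleGraph (Fin m)) □ pathGraph n) c)
    (j j' : Fin n) (hj : (j' : ℕ) = (j : ℕ) + 1) :
    ¬ ∃ x : Fin (m + 1), (∀ i : Fin m, c (i, j) ≠ x) ∧ (∀ i : Fin m, c (i, j') ≠ x) := by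
  rintro ⟨x, hxj, hxj'⟩
  obtain ⟨hsurj, hprop, hinj⟩ := hc
  have hcol : ∀ w : Fin m × Fin n, c w = x → w.2.val ≠ j.val ∧ w.2.val ≠ j.val + 1 := by
    intro w hw
    constructor
    · intro h
      have h2 : w.2 = j := Fin.ext h
      apply hxj w.1
      rw [← h2]
      exact hw
    · intro h
      have h2 : w.2 = j' := Fin.ext (by omega)
      apply hxj' w.1
      rw [← h2]
      exact hw
  have hfull_j := column_full c x hprop j hxj
  have hfull_j' := column_full c x hprop j' hxj'
  have key := key_lemma c j j' x hprop hinj hfull_j hfull_j' hj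
  obtain ⟨v0, hv0⟩ := hsurj x
  classical
  set SL := Finset.univ.filter (fun w : Fin m × Fin n => c w = x ∧ w.2.val < j.val) with hSL
  set SR := Finset.univ.filter
    (fun w : Fin m × Fin n => c w = x ∧ j.val + 1 < w.2.val) with hSR
  have hmemL : ∀ w : Fin m × Fin n, w ∈ SL ↔ c w = x ∧ w.2.val < j.val := by
    intro w; simp [hSL]
  have hmemR : ∀ w : Fin m × Fin n, w ∈ SR ↔ c w = x ∧ j.val + 1 < w.2.val := by
    intro w; simp [hSR]
  have hv0' := hcol v0 hv0
  have hv0mem : v0 ∈ SL ∨ v0 ∈ SR := by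
    rcases (show v0.2.val < j.val ∨ j.val + 1 < v0.2.val by omega) with h | h
    · exact Or.inl ((hmemL v0).mpr ⟨hv0, h⟩)
    · exact Or.inr ((hmemR v0).mpr ⟨hv0, h⟩)
  by_cases hL : SL.Nonempty
  · obtain ⟨w0, hw0mem, hw0max⟩ := Finset.exists_max_image SL (fun w => w.2.val) hL
    obtain ⟨hw0x, hw0l⟩ := (hmemL w0).mp hw0mem
    have hmaxl : ∀ w : Fin m × Fin n, c w = x → w.2.val < j.val → w.2.val ≤ w0.2.val :=
      fun w hw h2 => hw0max w ((hmemL w).mpr ⟨hw, h2⟩)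
    by_cases hR : SR.Nonempty
    · obtain ⟨w1, hw1mem, hw1min⟩ := Finset.exists_min_image SR (fun w => w.2.val) hR
      obtain ⟨hw1x, hw1r⟩ := (hmemR w1).mp hw1mem
      have hminr : ∀ w : Fin m × Fin n, c w = x → j.val + 1 < w.2.val → w1.2.val ≤ w.2.val :=
        fun w hw h2 => hw1min w ((hmemR w).mpr ⟨hw, h2⟩)
      rcases lt_trichotomy (j.val - w0.2.val) (w1.2.val - (j.val + 1)) with ht | ht | ht
      · exact case_left c j j' x hprop key hfull_j hj hxj' hcol w0 hw0x hw0l hmaxl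
          (fun w hw h2 => by have := hminr w hw h2; omega)
      · exact case_eq c j j' x hm hprop key hfull_j hfull_j' hj hcol w0 hw0x hw0l hmaxl
          w1 hw1x hw1r hminr ht
      · exact case_right c j j' x hprop key hfull_j' hj hxj hcol w1 hw1x hw1r hminr
          (fun w hw h2 => by have := hmaxl w hw h2; omega)
    · exact case_left c j j' x hprop key hfull_j hj hxj' hcol w0 hw0x hw0l hmaxl
        (fun w hw h2 => absurd ⟨w, (hmemR w).mpr ⟨hw, h2⟩⟩ hR)
  · have hR : SR.Nonempty := by
      rcases hv0mem with h | h
      · exact absurd ⟨v0, h⟩ hL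
      · exact ⟨v0, h⟩
    obtain ⟨w1, hw1mem, hw1min⟩ := Finset.exists_min_image SR (fun w => w.2.val) hR
    obtain ⟨hw1x, hw1r⟩ := (hmemR w1).mp hw1mem
    have hminr : ∀ w : Fin m × Fin n, c w = x → j.val + 1 < w.2.val → w1.2.val ≤ w.2.val :=
      fun w hw h2 => hw1min w ((hmemR w).mpr ⟨hw, h2⟩)
    exact case_right c j j' x hprop key hfull_j' hj hxj hcol w1 hw1x hw1r hminr
      (fun w hw h2 => absurd ⟨w, (hmemL w).mpr ⟨hw, h2⟩⟩ hL)
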